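/- arXiv:2512.16507 — 2 statements merged into one kernel-verified Lean document; each statement's English description precedes it below -/
import Mathlib

section
/- For every integer r ≥ 2, with n = 3r − 1, the quantities C(6r−2, 2r−1) − C(6r−2, 2r−3) and C(6r−2, 2r) − C(6r−2, 2r−2) are not equal. -/
private lemma stmt_8_aux (m a b c d : ℤ) (hm : 0 ≤ m)
    (hA : b * (2 * m + 2) = a * (4 * m + 9))
    (hB : c * (2 * m + 3) = b * (4 * m + 8))
    (hC : d * (2 * m + 4) = c * (4 * m + 7))
    (hb : 1 ≤ b) : c - a ≠ d - b := by
  have key : (d + a - c - b) * ((2 * m + 3) * (2 * m + 4) * (4 * m + 9)) =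
      b * (24 * m ^ 3 + 128 * m ^ 2 + 226 * m + 132) := by
    linear_combination ((2 * m + 3) * (4 * m + 9)) * hC +
      ((2 * m + 3) * (4 * m + 9)) * hB - ((2 * m + 3) * (2 * m + 4)) * hA
  have hM : (0 : ℤ) < (2 * m + 3) * (2 * m + 4) * (4 * m + 9) := by positivity
  have hP : (0 : ℤ) < 24 * m ^ 3 + 128 * m ^ 2 + 226 * m + 132 := by positivity
  have hprod : 0 < (d + a - c - b) * ((2 * m + 3) * (2 * m + 4) * (4 * m + 9)) := by
    rw [key]; exact mul_pos (by linarith) hP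
  have hx : 0 < d + a - c - b := by
    rcases mul_pos_iff.mp hprod with ⟨h1, _⟩ | ⟨_, h2⟩
    · linarith
    · linarith
  intro h
  linarith

/-- For every integer `r ≥ 2`, the quantities `C(6r−2, 2r−1) − C(6r−2, 2r−3)`
and `C(6r−2, 2r) − C(6r−2, 2r−2)` are not equal. -/
theorem stmt_8 (r : ℕ) (hr : 2 ≤ r) :
    ((6 * r - 2).choose (2 * r - 1) : ℤ) - (6 * r - 2).choose (2 * r - 3) ≠
      ((6 * r - 2).choose (2 * r) : ℤ) - (6 * r - 2).choose (2 * r - 2) := by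
  obtain ⟨m, rfl⟩ := Nat.exists_eq_add_of_le hr
  have e1 : 6 * (2 + m) - 2 = 6 * m + 10 := by omega
  have e2 : 2 * (2 + m) - 1 = 2 * m + 3 := by omega
  have e3 : 2 * (2 + m) - 3 = 2 * m + 1 := by omega
  have e5 : 2 * (2 + m) - 2 = 2 * m + 2 := by omega
  have e4 : 2 * (2 + m) = 2 * m + 4 := by omega
  rw [e1, e2, e3, e5, e4]
  set N := 6 * m + 10 with hN
  have sA := Nat.choose_succ_right_eq N (2 * m + 1)
  have sB := Nat.choose_succ_right_eq N (2 * m + 2)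
  have sC := Nat.choose_succ_right_eq N (2 * m + 3)
  have rA : N - (2 * m + 1) = 4 * m + 9 := by omega
  have rB : N - (2 * m + 2) = 4 * m + 8 := by omega
  have rC : N - (2 * m + 3) = 4 * m + 7 := by omega
  rw [rA, show (2 * m + 1) + 1 = 2 * m + 2 from by ring] at sA
  rw [rB, show (2 * m + 2) + 1 = 2 * m + 3 from by ring] at sB
  rw [rC, show (2 * m + 3) + 1 = 2 * m + 4 from by ring] at sC
  refine stmt_8_aux (m : ℤ) _ _ _ _ (by positivity) ?_ ?_ ?_ ?_
  · exact_mod_cast congrArg (Nat.cast : ℕ → ℤ) sA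
  · exact_mod_cast congrArg (Nat.cast : ℕ → ℤ) sB
  · exact_mod_cast congrArg (Nat.cast : ℕ → ℤ) sC
  · exact_mod_cast Nat.choose_pos (show 2 * m + 2 ≤ N by omega)
end

section
/- For r ≥ 2 and 2 ≤ p ≤ 2r, every coordinate of μ'_p + ρ has absolute value strictly less than 3r−1, where μ'_p = −(2p−2) Σ_{j=1}^{p} L_j − (2p−1) Σ_{j=p+1}^{2r} L_j and ρ = Σ_{j=1}^{3r−1} (3r−j) L_j. For p = 1, the coordinate at L_1 equals 3r−1 but all other coordinates have absolute value strictly less than 3r−2. -/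
/-- For `r ≥ 2`, consider the coordinates of `μ'_p + ρ` in the basis
`L_1, …, L_{3r−1}`: the `j`-th coordinate is `(3r−j) − (2p−2)` for `1 ≤ j ≤ p`,
`(3r−j) − (2p−1)` for `p+1 ≤ j ≤ 2r`, and `3r−j` for `j > 2r`.
For `2 ≤ p ≤ 2r`, every coordinate has absolute value strictly less than `3r−1`.
For `p = 1`, the coordinate at `L_1` equals `3r−1`, but all other coordinates
have absolute value strictly less than `3r−2`. -/
theorem stmt_14 (r p : ℤ) (hr : 2 ≤ r) :
    (2 ≤ p → p ≤ 2 * r → ∀ j : ℤ, 1 ≤ j → j ≤ 3 * r - 1 →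
      |if j ≤ p then (3 * r - j) - (2 * p - 2)
        else if j ≤ 2 * r then (3 * r - j) - (2 * p - 1)
        else 3 * r - j| < 3 * r - 1) ∧
    (p = 1 →
      ((if (1 : ℤ) ≤ p then (3 * r - 1) - (2 * p - 2)
          else if (1 : ℤ) ≤ 2 * r then (3 * r - 1) - (2 * p - 1)
          else 3 * r - 1) = 3 * r - 1) ∧
      ∀ j : ℤ, 2 ≤ j → j ≤ 3 * r - 1 →
        |if j ≤ p then (3 * r - j) - (2 * p - 2)
          else if j ≤ 2 * r then (3 * r - j) - (2 * p - 1)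
          else 3 * r - j| < 3 * r - 2) := by
  constructor
  · intro hp hpr j hj hjr
    split_ifs with h1 h2 <;> rw [abs_lt] <;> omega
  · intro hp
    refine ⟨by split_ifs <;> omega, ?_⟩
    intro j hj hjr
    split_ifs with h1 h2 <;> rw [abs_lt] <;> omega
end
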